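/- arXiv:1206.4790 — 6 statements merged into one kernel-verified Lean document; each statement's English description precedes it below -/
import Mathlib

section
/- Let π be a group and Z a central subgroup of π that is free abelian of finite rank k. Suppose there exists a finite-index subgroup π′ of π with Z ≤ π′ together with a group homomorphism r : π′ → Z whose restriction to Z is the identity (i.e. Z is a retract of π′). Then the composite of the inclusion Z → π with the natural map π → π^ab to the abelianization is injective. -/
/-- Let `π` be a group and `Z` a central subgroup of `π` that is free abelian
of finite rank `k`.  Suppose there is a finite-index subgroup `π'` of `π` with `Z ≤ π'`
together with a homomorphism `r : π' → Z` restricting to the identity on `Z`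
(i.e. `Z` is a retract of `π'`).  Then the composite `Z → π → π^ab` of the inclusion with
the natural map to the abelianization is injective. -/
theorem homologically_injective_of_retract
    {π : Type*} [Group π] (k : ℕ) (Z : Subgroup π)
    (hZcentral : Z ≤ Subgroup.center π)
    (hZfree : Nonempty (Z ≃* Multiplicative (Fin k → ℤ)))
    (π' : Subgroup π) (hfi : π'.FiniteIndex) (hZπ' : Z ≤ π')
    (r : π' →* Z)
    (hr : ∀ (z : π) (hz : z ∈ Z), r ⟨z, hZπ' hz⟩ = ⟨z, hz⟩) :
    Function.Injective (fun z : Z => Abelianization.of (z : π)) := by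
  obtain ⟨e⟩ := hZfree
  -- Z is commutative since it is central
  letI : CommGroup Z :=
    { (inferInstance : Group Z) with
      mul_comm := fun a b => Subtype.ext
        ((Subgroup.mem_center_iff.mp (hZcentral a.2) (b : π)).symm) }
  -- transfer homomorphism
  let T : π →* Z := MonoidHom.transfer r
  have key : ∀ z : π, z ∈ Z → ∀ (k : ℕ) (g₀ : π),
      g₀⁻¹ * z ^ k * g₀ ∈ π' → g₀⁻¹ * z ^ k * g₀ = z ^ k := by
    intro z hz k g₀ _
    have hck : g₀ * z ^ k = z ^ k * g₀ :=
      Subgroup.mem_center_iff.mp ((Subgroup.center π).pow_mem (hZcentral hz) k) g₀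
    rw [mul_assoc, ← hck, ← mul_assoc, inv_mul_cancel, one_mul]
  have hTz : ∀ (z : π) (hz : z ∈ Z), T z = ⟨z ^ π'.index, Z.pow_mem hz _⟩ := by
    intro z hz
    have := MonoidHom.transfer_eq_pow r z (key z hz)
    rw [this]
    have hmem : z ^ π'.index ∈ Z := Z.pow_mem hz _
    rw [show (⟨z ^ π'.index, _⟩ : π') = ⟨z ^ π'.index, hZπ' hmem⟩ from rfl, hr _ hmem]
  -- factor T through the abelianization
  let L : Abelianization π →* Z := Abelianization.lift T
  intro z₁ z₂ h
  simp only at h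
  have hL : L (Abelianization.of (z₁ : π)) = L (Abelianization.of (z₂ : π)) := by rw [h]
  simp only [L, Abelianization.lift_apply_of] at hL
  rw [hTz _ z₁.2, hTz _ z₂.2] at hL
  have hpow : z₁ ^ π'.index = z₂ ^ π'.index := by
    apply Subtype.ext
    simpa [SubgroupClass.coe_pow] using congrArg Subtype.val hL
  -- use freeness to cancel the power
  have hn : π'.index ≠ 0 := hfi.index_ne_zero
  have : e z₁ ^ π'.index = e z₂ ^ π'.index := by
    rw [← map_pow, ← map_pow, hpow]
  have hadd : (π'.index : ℤ) • (Multiplicative.toAdd (e z₁))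
      = (π'.index : ℤ) • (Multiplicative.toAdd (e z₂)) := by
    rw [Nat.cast_smul_eq_nsmul ℤ, Nat.cast_smul_eq_nsmul ℤ, ← toAdd_pow, ← toAdd_pow, this]
  have : Multiplicative.toAdd (e z₁) = Multiplicative.toAdd (e z₂) :=
    smul_right_injective (Fin k → ℤ) (by exact_mod_cast hn) hadd
  exact e.injective (Multiplicative.toAdd.injective this)
end

section
/- Let π be a group whose abelianization π^ab is finitely generated, and let Z be a central subgroup of π that is free abelian of finite rank k such that the composite Z → π → π^ab is injective. Then there exist a finite-index normal subgroup π′ of π containing Z and a group homomorphism r : π′ → Z whose restriction to Z is the identity; consequently π′ is the internal direct product of Z and ker r, i.e. the central extension 1 → Z → π′ → π′/Z → 1 splits. -/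
set_option maxHeartbeats 1000000 in
set_option synthInstance.maxHeartbeats 400000 in
/-- Let `π` be a group with finitely generated abelianization and let `Z` be a
central subgroup of `π`, free abelian of finite rank `k`, such that the composite
`Z → π → π^ab` is injective.  Then there exist a finite-index normal subgroup `π'` of `π`
containing `Z` and a homomorphism `r : π' → Z` restricting to the identity on `Z`;
consequently `π'` is the internal direct product of `Z` and `ker r`, i.e. the central
extension `1 → Z → π' → π'/Z → 1` splits. -/
theorem splits_of_homologically_injective
    {π : Type*} [Group π] (k : ℕ) (Z : Subgroup π)
    (hZcentral : Z ≤ Subgroup.center π)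
    (hZfree : Nonempty (Z ≃* Multiplicative (Fin k → ℤ)))
    (hfg : Group.FG (Abelianization π))
    (hinj : Function.Injective (fun z : Z => Abelianization.of (z : π))) :
    ∃ π' : Subgroup π, π'.Normal ∧ π'.FiniteIndex ∧ ∃ hZπ' : Z ≤ π',
      ∃ r : π' →* Z,
        (∀ (z : π) (hz : z ∈ Z), r ⟨z, hZπ' hz⟩ = ⟨z, hz⟩) ∧
        Z.subgroupOf π' ⊓ r.ker = ⊥ ∧ Z.subgroupOf π' ⊔ r.ker = ⊤ := by
  classical
  obtain ⟨eZ⟩ := hZfree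
  haveI := hfg
  set A := Abelianization π with hA
  let ofA : π →* A := Abelianization.of
  haveI : Module.Finite ℤ (Additive A) := Module.Finite.iff_addGroup_fg.mpr inferInstance
  set T := Submodule.torsion ℤ (Additive A) with hT
  -- the image of Z in the abelianization, as a submodule
  let B : Subgroup A := Z.map ofA
  let BM : Submodule ℤ (Additive A) := (Subgroup.toAddSubgroup B).toIntSubmodule
  have hmemBM : ∀ x : Additive A, x ∈ BM ↔ x.toMul ∈ B := fun _ => Iff.rfl
  -- Z-torsion-freeness of BM
  have hBMtf : ∀ x ∈ BM, x ∈ T → x = 0 := by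
    intro x hx ht
    rw [Submodule.mem_torsion_iff] at ht
    obtain ⟨c, hc⟩ := ht
    obtain ⟨z, hz, hzx⟩ := (hmemBM x).mp hx
    have hc' : x.toMul ^ (c : ℤ) = 1 := by
      have := congrArg Additive.toMul hc
      exact this
    have hz1 : (⟨z, hz⟩ : Z) ^ (c : ℤ) = 1 := by
      apply hinj
      show ofA (((⟨z, hz⟩ : Z) ^ (c : ℤ) : Z) : π) = ofA ((1 : Z) : π)
      push_cast
      rw [map_zpow, hzx, hc']
      simp
    have heq : eZ ⟨z, hz⟩ ^ (c : ℤ) = 1 := by rw [← map_zpow, hz1, map_one]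
    have h0 : (c : ℤ) • (eZ ⟨z, hz⟩).toAdd = 0 := by
      simpa using congrArg Multiplicative.toAdd heq
    have hcne : (c : ℤ) ≠ 0 := nonZeroDivisors.coe_ne_zero c
    have h00 : (eZ ⟨z, hz⟩).toAdd = 0 := by
      rcases smul_eq_zero.mp h0 with h | h
      · exact absurd h hcne
      · exact h
    have h01 : eZ ⟨z, hz⟩ = 1 := Multiplicative.toAdd.injective (by simpa using h00)
    have hz1' : (⟨z, hz⟩ : Z) = 1 := eZ.injective (by simpa using h01)
    have hzz : z = 1 := congrArg Subtype.val hz1'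
    have : x.toMul = 1 := by rw [← hzx, hzz, map_one]
    exact Additive.toMul.injective (by simpa using this)
  -- set up torsion-free quotient and Smith normal form
  set F := (Additive A) ⧸ T with hF
  let bF := Module.Free.chooseBasis ℤ F
  let N : Submodule ℤ F := BM.map T.mkQ
  obtain ⟨n, snf⟩ := Submodule.smithNormalForm bF N
  have ha : ∀ j, snf.a j ≠ 0 := by
    intro j hj
    have := snf.snf j
    rw [hj, zero_smul] at this
    exact (snf.bN.ne_zero j) (Subtype.ext this)
  have h1 : ∀ (y : N) (j : Fin n), snf.bM.repr (y : F) (snf.f j)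
      = snf.a j * snf.bN.repr y j := by
    intro y j
    rw [snf.repr_apply_embedding_eq_repr_smul]
    simp
  -- the key linear functional
  let ℓ : Additive A →ₗ[ℤ] (Fin n → ℤ) :=
    LinearMap.pi (fun j => (snf.bM.coord (snf.f j)).comp T.mkQ)
  have hℓ : ∀ (x : Additive A) (j : Fin n), ℓ x j = snf.bM.repr (T.mkQ x) (snf.f j) :=
    fun _ _ => rfl
  -- the multiplicative avatar
  let Ψ : π →* Multiplicative (Fin n → ℤ) :=
    MonoidHom.mk' (fun g => Multiplicative.ofAdd (ℓ (Additive.ofMul (ofA g))))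
      (by intro g h; simp [map_mul, ← ofAdd_add])
  have hΨ : ∀ g : π, Ψ g = Multiplicative.ofAdd (ℓ (Additive.ofMul (ofA g))) := fun _ => rfl
  -- divisibility on BM
  have hdvd : ∀ x ∈ BM, ∀ j, snf.a j ∣ ℓ x j := by
    intro x hx j
    have hN : T.mkQ x ∈ N := Submodule.mem_map_of_mem hx
    rw [hℓ]
    exact ⟨snf.bN.repr ⟨T.mkQ x, hN⟩ j, h1 ⟨T.mkQ x, hN⟩ j⟩
  have hZBM : ∀ z ∈ Z, Additive.ofMul (ofA z) ∈ BM := by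
    intro z hz
    rw [hmemBM]
    exact ⟨z, hz, rfl⟩
  -- injectivity of Ψ on Z
  have hinjZ : ∀ z ∈ Z, Ψ z = 1 → z = 1 := by
    intro z hz hψ
    have hv : ℓ (Additive.ofMul (ofA z)) = 0 := by
      simpa [hΨ] using congrArg Multiplicative.toAdd hψ
    set x := Additive.ofMul (ofA z) with hxdef
    have hN : T.mkQ x ∈ N := Submodule.mem_map_of_mem (hZBM z hz)
    have hy0 : T.mkQ x = 0 := by
      have hrepr : snf.bN.repr ⟨T.mkQ x, hN⟩ = 0 := by
        ext j
        have h2 := h1 ⟨T.mkQ x, hN⟩ j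
        rw [← hℓ, hv] at h2
        simp only [Pi.zero_apply] at h2
        have := (mul_eq_zero.mp h2.symm).resolve_left (ha j)
        simpa using this
      have : (⟨T.mkQ x, hN⟩ : N) = 0 := snf.bN.repr.map_eq_zero_iff.mp hrepr
      exact congrArg Subtype.val this
    have hxT : x ∈ T := by rwa [← Submodule.Quotient.mk_eq_zero, ← Submodule.mkQ_apply]
    have hx0 : x = 0 := hBMtf x (hZBM z hz) hxT
    have hof : ofA z = 1 := by exact congrArg Additive.toMul hx0
    have : (⟨z, hz⟩ : Z) = 1 := hinj (show ofA ((⟨z, hz⟩ : Z) : π) = ofA ((1 : Z) : π) by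
      simpa using hof)
    exact congrArg Subtype.val this
  -- surjectivity of Ψ|Z onto the divisibility subgroup
  have hsurj : ∀ v : Fin n → ℤ, (∀ j, snf.a j ∣ v j) →
      ∃ z ∈ Z, Ψ z = Multiplicative.ofAdd v := by
    intro v hv
    choose c hc using hv
    let nn : N := ∑ j, c j • snf.bN j
    have hrepr : ∀ j, snf.bN.repr nn j = c j := by
      intro j
      simp only [nn, map_sum, map_smul, Module.Basis.repr_self]
      rw [Finset.sum_apply']
      simp [Finsupp.single_apply, Finset.sum_ite_eq']
    have hval : ∀ j, snf.bM.repr (nn : F) (snf.f j) = v j := by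
      intro j
      rw [h1 nn j, hrepr j]
      exact (hc j).symm
    obtain ⟨x, hxBM, hx⟩ := Submodule.mem_map.mp nn.2
    obtain ⟨z, hz, hzx⟩ := (hmemBM x).mp hxBM
    refine ⟨z, hz, ?_⟩
    have hxx : Additive.ofMul (ofA z) = x := congrArg Additive.ofMul hzx
    have hℓx : ℓ x = v := by
      funext j
      rw [hℓ, hx, hval j]
    rw [hΨ, hxx, hℓx]
  -- the finite quotient detecting divisibility
  haveI : ∀ j, NeZero (snf.a j).natAbs := fun j => ⟨Int.natAbs_ne_zero.mpr (ha j)⟩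
  let φ : (Fin n → ℤ) →+ (∀ j, ZMod (snf.a j).natAbs) :=
    AddMonoidHom.mk' (fun v j => ((v j : ℤ) : ZMod (snf.a j).natAbs))
      (by intro v w; funext j; push_cast; simp)
  let χ : Multiplicative (Fin n → ℤ) →* Multiplicative (∀ j, ZMod (snf.a j).natAbs) :=
    AddMonoidHom.toMultiplicative φ
  have hker : ∀ v : Fin n → ℤ, χ (Multiplicative.ofAdd v) = 1 ↔ ∀ j, snf.a j ∣ v j := by
    intro v
    have hval : χ (Multiplicative.ofAdd v) = Multiplicative.ofAdd (φ v) := rfl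
    rw [hval]
    have h0 : Multiplicative.ofAdd (φ v) = 1 ↔ φ v = 0 := by
      constructor
      · intro h; exact Multiplicative.ofAdd.injective (by simpa using h)
      · intro h; rw [h]; rfl
    rw [h0]
    constructor
    · intro h j
      rw [← Int.natAbs_dvd]
      exact (ZMod.intCast_zmod_eq_zero_iff_dvd _ _).mp (congrFun h j)
    · intro h
      funext j
      exact (ZMod.intCast_zmod_eq_zero_iff_dvd _ _).mpr (Int.natAbs_dvd.mpr (h j))
  -- the finite-index subgroup
  refine ⟨(χ.comp Ψ).ker, MonoidHom.normal_ker _, ?_, ?_, ?_⟩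
  · haveI : Finite ((χ.comp Ψ).range) := inferInstance
    exact Subgroup.finiteIndex_ker _
  · -- Z ≤ ker
    intro z hz
    rw [MonoidHom.mem_ker, MonoidHom.comp_apply, hΨ]
    exact (hker _).mpr (hdvd _ (hZBM z hz))
  · -- construct the retraction
    have hZle : Z ≤ (χ.comp Ψ).ker := by
      intro z hz
      rw [MonoidHom.mem_ker, MonoidHom.comp_apply, hΨ]
      exact (hker _).mpr (hdvd _ (hZBM z hz))
    set π' : Subgroup π := (χ.comp Ψ).ker with hπ'
    let J : Subgroup (Multiplicative (Fin n → ℤ)) := Z.map Ψ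
    have hπ'J : ∀ g : π', Ψ (g : π) ∈ J := by
      rintro ⟨g, hg⟩
      rw [MonoidHom.mem_ker, MonoidHom.comp_apply, hΨ] at hg
      obtain ⟨z, hz, hzg⟩ := hsurj _ ((hker _).mp hg)
      exact ⟨z, hz, by rw [hzg]; exact (hΨ g).symm⟩
    let θ : Z →* J := (Ψ.comp Z.subtype).codRestrict J (fun z => ⟨z.1, z.2, rfl⟩)
    have hθbij : Function.Bijective θ := by
      constructor
      · intro z w h
        have h' : Ψ (z : π) = Ψ (w : π) := congrArg Subtype.val h
        have h'' : Ψ ((z : π) * (w : π)⁻¹) = 1 := by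
          rw [map_mul, map_inv, h', mul_inv_cancel]
        have := hinjZ _ (mul_mem z.2 (inv_mem w.2)) h''
        exact Subtype.ext (mul_inv_eq_one.mp this)
      · rintro ⟨w, hw⟩
        rw [Subgroup.mem_map] at hw
        obtain ⟨z, hz, hzw⟩ := hw
        exact ⟨⟨z, hz⟩, Subtype.ext hzw⟩
    let e₁ : Z ≃* J := MulEquiv.ofBijective θ hθbij
    let ρ : π' →* J := (Ψ.comp π'.subtype).codRestrict J (fun g => hπ'J g)
    let r : π' →* Z := e₁.symm.toMonoidHom.comp ρ
    have hrZ : ∀ (z : π) (hz : z ∈ Z), r ⟨z, hZle hz⟩ = ⟨z, hz⟩ := by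
      intro z hz
      show e₁.symm (ρ ⟨z, hZle hz⟩) = ⟨z, hz⟩
      rw [MulEquiv.symm_apply_eq]
      apply Subtype.ext
      rfl
    refine ⟨r, hrZ, ?_, ?_⟩
    · rw [eq_bot_iff]
      intro x hx
      rw [Subgroup.mem_inf] at hx
      obtain ⟨hx1, hx2⟩ := hx
      rw [Subgroup.mem_subgroupOf] at hx1
      rw [MonoidHom.mem_ker] at hx2
      have hxeq : (⟨(x : π), hZle hx1⟩ : π') = x := Subtype.ext rfl
      have h3 := hrZ (x : π) hx1
      rw [hxeq] at h3
      rw [h3] at hx2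
      have : (x : π) = 1 := congrArg Subtype.val hx2
      exact Subgroup.mem_bot.mpr (Subtype.ext this)
    · rw [eq_top_iff]
      intro x _
      have hz2 : ((r x : Z) : π) ∈ Z := (r x).2
      have hz' : (⟨((r x : Z) : π), hZle hz2⟩ : π') ∈ Z.subgroupOf π' :=
        Subgroup.mem_subgroupOf.mpr hz2
      have hy : (⟨((r x : Z) : π), hZle hz2⟩ : π')⁻¹ * x ∈ r.ker := by
        rw [MonoidHom.mem_ker, map_mul, map_inv, hrZ _ hz2]
        have heq : (⟨((r x : Z) : π), hz2⟩ : Z) = r x := Subtype.ext rfl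
        rw [heq, inv_mul_cancel]
      have hmem := Subgroup.mul_mem_sup hz' hy
      rwa [← mul_assoc, mul_inv_cancel, one_mul] at hmem
end

section
/- Let π be a group containing a normal subgroup A of finite index that is free abelian of finite rank n, and let B be a subgroup of the center of π with B ≤ A. Then there exists a finite-index normal subgroup π′ of π with B ≤ π′ together with a group homomorphism r : π′ → B whose restriction to B is the identity; equivalently, the central extension 1 → B → π′ → π′/B → 1 splits. -/
open Finset in
/-- Key lemma: any additive subgroup `N` of `ℤⁿ` is contained in a finite index subgroup
`A'` of which it is a retract. -/
lemma key_retract_zn (n : ℕ) (N : AddSubgroup (Fin n → ℤ)) :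
    ∃ A' : AddSubgroup (Fin n → ℤ), A'.FiniteIndex ∧ ∃ hNA' : N ≤ A',
      ∃ r : A' →+ N, ∀ (x) (hx : x ∈ N), r ⟨x, hNA' hx⟩ = ⟨x, hx⟩ := by
  classical
  obtain ⟨s, snf⟩ := (N.toIntSubmodule).smithNormalForm (Pi.basisFun ℤ (Fin n))
  have ha : ∀ i, snf.a i ≠ 0 := by
    intro i h
    apply snf.bN.ne_zero i
    have h2 := snf.snf i
    rw [h, zero_smul] at h2
    exact Subtype.ext h2
  haveI : ∀ i : Fin s, NeZero (snf.a i).natAbs := fun i => ⟨Int.natAbs_ne_zero.mpr (ha i)⟩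
  -- the reduction homomorphism
  let ρ : (Fin n → ℤ) →+ (∀ i : Fin s, ZMod (snf.a i).natAbs) :=
  { toFun := fun m i => ((snf.bM.repr m (snf.f i) : ℤ) : ZMod (snf.a i).natAbs)
    map_zero' := by funext i; simp
    map_add' := fun x y => by funext i; simp [map_add] }
  have hmem : ∀ m : Fin n → ℤ, m ∈ ρ.ker ↔ ∀ i, snf.a i ∣ snf.bM.repr m (snf.f i) := by
    intro m
    rw [AddMonoidHom.mem_ker]
    constructor
    · intro h i
      have h2 : ((snf.bM.repr m (snf.f i) : ℤ) : ZMod (snf.a i).natAbs) = 0 := congrFun h i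
      rw [ZMod.intCast_zmod_eq_zero_iff_dvd, Int.natAbs_dvd] at h2
      exact h2
    · intro h
      funext i
      show ((snf.bM.repr m (snf.f i) : ℤ) : ZMod (snf.a i).natAbs) = 0
      rw [ZMod.intCast_zmod_eq_zero_iff_dvd, Int.natAbs_dvd]
      exact h i
  have hdvd : ∀ (x : Fin n → ℤ) (hx : x ∈ N.toIntSubmodule) (i : Fin s),
      snf.bM.repr x (snf.f i) = snf.a i * snf.bN.repr ⟨x, hx⟩ i := by
    intro x hx i
    have h2 := snf.repr_apply_embedding_eq_repr_smul (m := ⟨x, hx⟩) (i := i)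
    rwa [map_smul, Finsupp.smul_apply, smul_eq_mul] at h2
  have hNker : N ≤ ρ.ker := by
    intro x hx
    rw [hmem]
    intro i
    exact ⟨snf.bN.repr ⟨x, hx⟩ i,
      hdvd x (hx) i⟩
  have hbNmem : ∀ i, (snf.bN i : Fin n → ℤ) ∈ N :=
    fun i => (snf.bN i).2
  set F : (Fin n → ℤ) → (Fin n → ℤ) :=
    fun m => ∑ i, (snf.bM.repr m (snf.f i) / snf.a i) • (snf.bN i : Fin n → ℤ) with hF
  have hFmem : ∀ m, F m ∈ N := fun m => N.sum_mem (fun i _ => N.zsmul_mem (hbNmem i) _)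
  have hFid : ∀ (x : Fin n → ℤ), x ∈ N → F x = x := by
    intro x hx
    have hx' : x ∈ N.toIntSubmodule := hx
    have h1 : F x = ∑ i, snf.bN.repr ⟨x, hx'⟩ i • (snf.bN i : Fin n → ℤ) := by
      apply Finset.sum_congr rfl
      intro i _
      congr 1
      rw [hdvd x hx' i, Int.mul_ediv_cancel_left _ (ha i)]
    have h2 := congrArg (Subtype.val) (snf.bN.sum_repr ⟨x, hx'⟩)
    rw [h1]
    rw [Submodule.coe_sum] at h2
    exact h2
  refine ⟨ρ.ker, ?_, hNker, ?_⟩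
  · constructor
    rw [AddSubgroup.index_ker]
    haveI : Finite (∀ i : Fin s, ZMod (snf.a i).natAbs) := inferInstance
    exact Nat.card_ne_zero.mpr ⟨⟨0, AddSubgroup.zero_mem _⟩, inferInstance⟩
  · refine ⟨{ toFun := fun m => ⟨F ↑m, hFmem ↑m⟩
              map_zero' := ?_
              map_add' := ?_ }, ?_⟩
    · apply Subtype.ext
      show F 0 = 0
      rw [hF]
      apply Finset.sum_eq_zero
      intro i _
      rw [map_zero]
      simp
    · rintro ⟨m₁, hm₁⟩ ⟨m₂, hm₂⟩
      apply Subtype.ext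
      show F (m₁ + m₂) = F m₁ + F m₂
      rw [hF]
      simp only [map_add, Finsupp.add_apply]
      rw [← Finset.sum_add_distrib]
      apply Finset.sum_congr rfl
      intro i _
      rw [Int.add_ediv_of_dvd_left ((hmem m₁).mp hm₁ i), add_smul]
    · intro x hx
      apply Subtype.ext
      exact hFid x hx

/-- Let `π` be a group containing a normal subgroup `A` of finite index which
is free abelian of finite rank `n`, and let `B` be a subgroup of the center of `π` with
`B ≤ A`.  Then there exists a finite-index normal subgroup `π'` of `π` with `B ≤ π'`
together with a homomorphism `r : π' → B` restricting to the identity on `B`; equivalently,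
the central extension `1 → B → π' → π'/B → 1` splits. -/
theorem central_subgroup_of_crystallographic_retract
    {π : Type*} [Group π] (n : ℕ) (A : Subgroup π)
    (hAnormal : A.Normal) (hAfi : A.FiniteIndex)
    (hAfree : Nonempty (A ≃* Multiplicative (Fin n → ℤ)))
    (B : Subgroup π) (hBcentral : B ≤ Subgroup.center π) (hBA : B ≤ A) :
    ∃ π' : Subgroup π, π'.Normal ∧ π'.FiniteIndex ∧ ∃ hBπ' : B ≤ π',
      ∃ r : π' →* B, ∀ (x : π) (hx : x ∈ B), r ⟨x, hBπ' hx⟩ = ⟨x, hx⟩ := by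
  classical
  obtain ⟨e⟩ := hAfree
  set B₁ : Subgroup A := B.subgroupOf A with hB₁def
  set N : AddSubgroup (Fin n → ℤ) :=
    Subgroup.toAddSubgroup' (B₁.map e.toMonoidHom) with hNdef
  have hmemN : ∀ x : Fin n → ℤ, x ∈ N ↔
      Multiplicative.ofAdd x ∈ B₁.map e.toMonoidHom := fun x => Iff.rfl
  obtain ⟨A', hA'fi, hNA', r, hr⟩ := key_retract_zn n N
  -- the subgroup `S` of `A` corresponding to `A'`
  let q : Multiplicative (Fin n → ℤ) →* Multiplicative ((Fin n → ℤ) ⧸ A') :=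
    AddMonoidHom.toMultiplicative (QuotientAddGroup.mk' A')
  let S : Subgroup A := (q.comp e.toMonoidHom).ker
  have hmemS : ∀ a : A, a ∈ S ↔ Multiplicative.toAdd (e a) ∈ A' := by
    intro a
    rw [MonoidHom.mem_ker]
    show Multiplicative.ofAdd ((QuotientAddGroup.mk' A') (Multiplicative.toAdd (e a))) = 1 ↔ _
    rw [show (1 : Multiplicative ((Fin n → ℤ) ⧸ A')) = Multiplicative.ofAdd 0 from rfl]
    rw [Multiplicative.ofAdd.apply_eq_iff_eq]
    rw [QuotientAddGroup.mk'_apply, QuotientAddGroup.eq_zero_iff]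
  have hSfi : S.FiniteIndex := by
    constructor
    rw [Subgroup.index_ker]
    haveI : Finite ((Fin n → ℤ) ⧸ A') := @AddSubgroup.finite_quotient_of_finiteIndex _ _ A' hA'fi
    haveI : Finite (Multiplicative ((Fin n → ℤ) ⧸ A')) :=
      Finite.of_equiv _ Multiplicative.ofAdd
    exact Nat.card_ne_zero.mpr ⟨⟨1, Subgroup.one_mem _⟩, inferInstance⟩
  set π'' : Subgroup π := S.map A.subtype with hπ''def
  have hπ''A : π'' ≤ A := Subgroup.map_subtype_le S
  have hπ''fi : π''.FiniteIndex := by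
    constructor
    have hsub : π''.subgroupOf A = S :=
      Subgroup.comap_map_eq_self_of_injective A.subtype_injective S
    have h1 : π''.relIndex A * A.index = π''.index :=
      Subgroup.relIndex_mul_index hπ''A
    have h2 : π''.relIndex A = S.index := congrArg Subgroup.index hsub
    rw [h2] at h1
    rw [← h1]
    exact mul_ne_zero hSfi.index_ne_zero hAfi.index_ne_zero
  have hBS : ∀ (x : π) (hx : x ∈ B), (⟨x, hBA hx⟩ : A) ∈ S := by
    intro x hx
    rw [hmemS]
    apply hNA'
    rw [hmemN, ofAdd_toAdd]
    exact ⟨⟨x, hBA hx⟩, hx, rfl⟩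
  have hBπ'' : B ≤ π'' := by
    intro x hx
    exact ⟨⟨x, hBA hx⟩, hBS x hx, rfl⟩
  haveI : B.Normal := by
    constructor
    intro x hx g
    have hc := (Subgroup.mem_center_iff.mp (hBcentral hx)) g
    rw [hc, mul_assoc, mul_inv_cancel, mul_one]
    exact hx
  haveI := hπ''fi
  have hBπ' : B ≤ π''.normalCore := Subgroup.normal_le_normalCore.mpr hBπ''
  have hπ'le : π''.normalCore ≤ π'' := Subgroup.normalCore_le π''
  have hπ'A : π''.normalCore ≤ A := hπ'le.trans hπ''A
  -- membership of elements of the normal core in A'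
  have hmem' : ∀ x : π''.normalCore,
      Multiplicative.toAdd (e ⟨↑x, hπ'A x.2⟩) ∈ A' := by
    rintro ⟨x, hx⟩
    obtain ⟨y, hyS, hy⟩ := hπ'le hx
    have : (⟨x, hπ'A hx⟩ : A) = y := Subtype.ext hy.symm
    rw [this]
    exact (hmemS y).mp hyS
  have hz : ∀ (v : Multiplicative (Fin n → ℤ)), v ∈ B₁.map e.toMonoidHom →
      (↑(e.symm v) : π) ∈ B := by
    rintro v ⟨w, hw, rfl⟩
    have : e.symm (e.toMonoidHom w) = w := e.symm_apply_apply w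
    rw [this]
    exact hw
  refine ⟨π''.normalCore, inferInstance, inferInstance, hBπ', ?_⟩
  refine ⟨{ toFun := fun x =>
              ⟨↑(e.symm (Multiplicative.ofAdd
                  ↑(r ⟨Multiplicative.toAdd (e ⟨↑x, hπ'A x.2⟩), hmem' x⟩))),
                hz _ (r _).2⟩
            map_one' := ?_
            map_mul' := ?_ }, ?_⟩
  · apply Subtype.ext
    show (↑(e.symm (Multiplicative.ofAdd ↑(r _))) : π) = 1
    have h1 : (⟨(1 : π''.normalCore), hπ'A (1 : π''.normalCore).2⟩ : A)
        = (1 : A) := rfl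
    have h0 : (⟨Multiplicative.toAdd (e (1 : A)), hmem' 1⟩ : A') = 0 := by
      apply Subtype.ext
      show Multiplicative.toAdd (e 1) = 0
      rw [map_one e]
      rfl
    rw [show (⟨Multiplicative.toAdd (e ⟨↑(1 : π''.normalCore), hπ'A (1 : π''.normalCore).2⟩), hmem' 1⟩ : A')
        = 0 from h0]
    rw [map_zero r]
    show (↑(e.symm (Multiplicative.ofAdd 0)) : π) = 1
    rw [show Multiplicative.ofAdd (0 : Fin n → ℤ) = 1 from rfl, map_one e.symm]
    rfl
  · rintro x y
    apply Subtype.ext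
    have hxy : (⟨↑(x * y), hπ'A (x * y).2⟩ : A)
        = ⟨↑x, hπ'A x.2⟩ * ⟨↑y, hπ'A y.2⟩ := rfl
    have hadd : (⟨Multiplicative.toAdd (e ⟨↑(x * y), hπ'A (x * y).2⟩), hmem' (x * y)⟩ : A')
        = ⟨Multiplicative.toAdd (e ⟨↑x, hπ'A x.2⟩), hmem' x⟩
          + ⟨Multiplicative.toAdd (e ⟨↑y, hπ'A y.2⟩), hmem' y⟩ := by
      apply Subtype.ext
      show Multiplicative.toAdd (e ⟨↑(x * y), hπ'A (x * y).2⟩) = _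
      rw [hxy, map_mul e]
      rfl
    show (↑(e.symm (Multiplicative.ofAdd ↑(r _))) : π) = _
    rw [hadd, map_add r]
    show (↑(e.symm (Multiplicative.ofAdd (↑(r _) + ↑(r _)))) : π) = _
    rw [ofAdd_add, map_mul e.symm]
    rfl
  · intro x hx
    apply Subtype.ext
    show (↑(e.symm (Multiplicative.ofAdd ↑(r _))) : π) = x
    have hmN : Multiplicative.toAdd (e ⟨x, hBA hx⟩) ∈ N := by
      rw [hmemN, ofAdd_toAdd]
      exact ⟨⟨x, hBA hx⟩, hx, rfl⟩
    have h1 : (⟨Multiplicative.toAdd (e ⟨↑(⟨x, hBπ' hx⟩ : π''.normalCore), hπ'A (hBπ' hx)⟩), hmem' ⟨x, hBπ' hx⟩⟩ : A')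
        = ⟨Multiplicative.toAdd (e ⟨x, hBA hx⟩), hNA' hmN⟩ := rfl
    rw [h1, hr _ hmN]
    show (↑(e.symm (Multiplicative.ofAdd (Multiplicative.toAdd (e ⟨x, hBA hx⟩)))) : π) = x
    rw [ofAdd_toAdd, e.symm_apply_apply]
end

section
/- Let π be a group containing a normal subgroup A of finite index that is free abelian of finite rank, and let B be a subgroup of the center of π with B ≤ A. Then the composite of the inclusion B → π with the natural map π → π^ab to the abelianization is injective. -/
/-- Let `π` be a group containing a normal subgroup `A` of finite index which
is free abelian of finite rank, and let `B` be a subgroup of the center of `π` with `B ≤ A`.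
Then the composite of the inclusion `B → π` with the natural map `π → π^ab` to the
abelianization is injective. -/
theorem central_subgroup_of_crystallographic_homologically_injective
    {π : Type*} [Group π] (n : ℕ) (A : Subgroup π)
    (hAnormal : A.Normal) (hAfi : A.FiniteIndex)
    (hAfree : Nonempty (A ≃* Multiplicative (Fin n → ℤ)))
    (B : Subgroup π) (hBcentral : B ≤ Subgroup.center π) (hBA : B ≤ A) :
    Function.Injective (fun b : B => Abelianization.of (b : π)) := by
  obtain ⟨e⟩ := hAfree
  set ϕ : A →* Multiplicative (Fin n → ℤ) := e.toMonoidHom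
  -- transfer homomorphism π → ℤⁿ
  set T : π →* Multiplicative (Fin n → ℤ) := MonoidHom.transfer ϕ
  intro b b' hbb'
  -- transfer factors through abelianization
  have hfac : ∀ x : π, (Abelianization.lift T) (Abelianization.of x) = T x := fun x =>
    Abelianization.lift_apply_of T x
  have hT : T (b : π) = T (b' : π) := by
    rw [← hfac, ← hfac]
    simpa using congrArg (Abelianization.lift T) hbb'
  -- for central elements, transfer is the index-th power
  have key : ∀ c : B, ∀ (k : ℕ) (g₀ : π),
      g₀⁻¹ * (c : π) ^ k * g₀ ∈ A → g₀⁻¹ * (c : π) ^ k * g₀ = (c : π) ^ k := by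
    intro c k g₀ _
    have hc : (c : π) ^ k ∈ Subgroup.center π := pow_mem (hBcentral c.2) k
    rw [Subgroup.mem_center_iff.mp hc g₀⁻¹, mul_assoc, inv_mul_cancel, mul_one]
  have hTb := MonoidHom.transfer_eq_pow ϕ (b : π) (key b)
  have hTb' := MonoidHom.transfer_eq_pow ϕ (b' : π) (key b')
  rw [hTb, hTb'] at hT
  have hpow : ((b : π) ^ A.index : π) = ((b' : π) ^ A.index : π) :=
    congrArg (Subtype.val) (e.injective hT)
  -- now use torsion-freeness of ℤⁿ
  have hm : A.index ≠ 0 := hAfi.index_ne_zero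
  have ha : ((⟨(b : π), hBA b.2⟩ : A) : A) ^ A.index = (⟨(b' : π), hBA b'.2⟩ : A) ^ A.index := by
    ext; simpa using hpow
  have := congrArg e ha
  rw [map_pow, map_pow] at this
  have h2 : A.index • (Multiplicative.toAdd (e ⟨(b : π), hBA b.2⟩))
      = A.index • (Multiplicative.toAdd (e ⟨(b' : π), hBA b'.2⟩)) := by
    have h := congrArg Multiplicative.toAdd this
    rw [toAdd_pow, toAdd_pow] at h
    exact h
  have h3 : Multiplicative.toAdd (e ⟨(b : π), hBA b.2⟩)
      = Multiplicative.toAdd (e ⟨(b' : π), hBA b'.2⟩) := by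
    have := smul_right_injective (M := Fin n → ℤ) (R := ℤ)
      (Int.natCast_ne_zero.mpr hm : (A.index : ℤ) ≠ 0)
    exact this (by exact_mod_cast h2)
  have h4 : (⟨(b : π), hBA b.2⟩ : A) = ⟨(b' : π), hBA b'.2⟩ :=
    e.injective (Multiplicative.toAdd.injective h3)
  exact Subtype.ext (Subtype.mk_eq_mk.mp h4)
end

section
/- Let π be a torsion-free group containing a normal subgroup A of finite index that is free abelian of finite rank n and equals its own centralizer in π. Then the center Z(π) of π is a finitely generated free abelian group, the composite Z(π) → π → π^ab is injective, and the rank of Z(π) equals the free rank of the abelianization π^ab, i.e. rank Z(π) = dim_ℚ(π^ab ⊗ ℚ). -/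
open scoped TensorProduct

open scoped IsMulCommutative

/-- A monoid is torsion-free if its only element of finite order is the identity
(the meaning of `Monoid.IsTorsionFree` in the older Mathlib). -/
def Monoid.IsTorsionFree (G : Type*) [Monoid G] : Prop :=
  ∀ g : G, g ≠ 1 → ¬IsOfFinOrder g

section NormMap

variable {π : Type*} [Group π] (A : Subgroup π) [hAn : A.Normal] [hAc : IsMulCommutative A]

/-- Conjugation of an element of an abelian normal subgroup `A`, indexed by a left coset. -/
noncomputable def cosetConj (a : ↥A) (q : π ⧸ A) : ↥A :=
  Quotient.liftOn' q
    (fun g => (⟨g⁻¹ * ↑a * g, by simpa using hAn.conj_mem _ a.2 g⁻¹⟩ : ↥A))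
    (by
      intro g g' h
      rw [QuotientGroup.leftRel_apply] at h
      ext
      show g⁻¹ * ↑a * g = g'⁻¹ * ↑a * g'
      have hx : g⁻¹ * ↑a * g ∈ A := by simpa using hAn.conj_mem _ a.2 g⁻¹
      have hcomm : (g⁻¹ * ↑a * g) * (g⁻¹ * g') = (g⁻¹ * g') * (g⁻¹ * ↑a * g) :=
        Subgroup.mul_comm_of_mem_isMulCommutative A hx h
      have goal' : (g⁻¹ * ↑a * g) * (g⁻¹ * g') = (g⁻¹ * g') * (g'⁻¹ * ↑a * g') := by group
      exact mul_left_cancel (hcomm.symm.trans goal'))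

theorem cosetConj_mk (a : ↥A) (g : π) :
    cosetConj A a (QuotientGroup.mk g)
      = ⟨g⁻¹ * ↑a * g, by simpa using hAn.conj_mem _ a.2 g⁻¹⟩ := rfl

variable [Fintype (π ⧸ A)]

/-- The "norm" homomorphism `A → A`, product of all conjugates. -/
noncomputable def subgroupNorm : ↥A →* ↥A where
  toFun a := ∏ q : π ⧸ A, cosetConj A a q
  map_one' := by
    refine Finset.prod_eq_one fun q _ => ?_
    induction q using QuotientGroup.induction_on with
    | H g => ext; simp [cosetConj_mk]
  map_mul' a b := by
    rw [← Finset.prod_mul_distrib]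
    refine Finset.prod_congr rfl fun q _ => ?_
    induction q using QuotientGroup.induction_on with
    | H g =>
      ext
      show g⁻¹ * ↑(a * b) * g = (g⁻¹ * ↑a * g) * (g⁻¹ * ↑b * g)
      push_cast
      group

theorem subgroupNorm_mem_center (a : ↥A) :
    (subgroupNorm A a : π) ∈ Subgroup.center π := by
  rw [Subgroup.mem_center_iff]
  intro h
  have key : MulAut.conjNormal h (subgroupNorm A a) = subgroupNorm A a := by
    show (MulAut.conjNormal h).toMonoidHom (subgroupNorm A a) = _
    have comp : ∀ q : π ⧸ A,
        (MulAut.conjNormal h).toMonoidHom (cosetConj A a q)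
          = cosetConj A a (q * (QuotientGroup.mk h)⁻¹) := by
      intro q
      induction q using QuotientGroup.induction_on with
      | H g =>
        have : (QuotientGroup.mk g : π ⧸ A) * (QuotientGroup.mk h)⁻¹
            = QuotientGroup.mk (g * h⁻¹) := by
          simp
        rw [this]
        ext
        show h * (g⁻¹ * ↑a * g) * h⁻¹ = (g * h⁻¹)⁻¹ * ↑a * (g * h⁻¹)
        group
    show (MulAut.conjNormal h).toMonoidHom (∏ q : π ⧸ A, cosetConj A a q) = _
    rw [map_prod]
    calc ∏ q : π ⧸ A, (MulAut.conjNormal h).toMonoidHom (cosetConj A a q)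
        = ∏ q : π ⧸ A, cosetConj A a ((Equiv.mulRight (QuotientGroup.mk h)⁻¹) q) := by
          exact Finset.prod_congr rfl fun q _ => comp q
      _ = ∏ q : π ⧸ A, cosetConj A a q :=
          Equiv.prod_comp (Equiv.mulRight ((QuotientGroup.mk h : π ⧸ A))⁻¹) _
  have := congrArg (Subtype.val) key
  rw [MulAut.conjNormal_apply] at this
  calc h * ↑(subgroupNorm A a) = h * ↑(subgroupNorm A a) * h⁻¹ * h := by group
    _ = ↑(subgroupNorm A a) * h := by rw [this]

theorem of_subgroupNorm (a : ↥A) :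
    Abelianization.of (subgroupNorm A a : π)
      = (Abelianization.of (a : π)) ^ Fintype.card (π ⧸ A) := by
  have h1 : Abelianization.of (subgroupNorm A a : π)
      = ∏ q : π ⧸ A, (Abelianization.of.comp A.subtype) (cosetConj A a q) := by
    rw [← map_prod]; rfl
  have h2 : ∀ q ∈ (Finset.univ : Finset (π ⧸ A)),
      (Abelianization.of.comp A.subtype) (cosetConj A a q) = Abelianization.of (a : π) := by
    intro q _
    induction q using QuotientGroup.induction_on with
    | H g =>
      show Abelianization.of (g⁻¹ * ↑a * g) = Abelianization.of (a : π)
      rw [map_mul, map_mul, map_inv, mul_assoc,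
        mul_comm (Abelianization.of (a : π)), ← mul_assoc, inv_mul_cancel, one_mul]
  rw [h1, Finset.prod_congr rfl h2, Finset.prod_const, Finset.card_univ]

end NormMap

/-- **Theorem 3.2 / Theorem E, algebraic form.** Let `π` be a torsion-free
group containing a normal finite-index subgroup `A` which is free abelian of finite rank `n`
and equals its own centralizer in `π`.  Then the center `Z(π)` is a finitely generated free
abelian group, the composite `Z(π) → π → π^ab` is injective, and the rank of `Z(π)` equals
the free rank of the abelianization, i.e. `rank Z(π) = dim_ℚ (π^ab ⊗ ℚ)`. -/
theorem center_rank_eq_first_betti_number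
    {π : Type*} [Group π] (n : ℕ)
    (htf : Monoid.IsTorsionFree π)
    (A : Subgroup π) (hAnormal : A.Normal) (hAfi : A.FiniteIndex)
    (hAfree : Nonempty (A ≃* Multiplicative (Fin n → ℤ)))
    (hAmax : Subgroup.centralizer (A : Set π) = A) :
    ∃ m : ℕ,
      Nonempty (Subgroup.center π ≃* Multiplicative (Fin m → ℤ)) ∧
      Function.Injective (fun z : Subgroup.center π => Abelianization.of (z : π)) ∧
      m = Module.finrank ℚ (ℚ ⊗[ℤ] Additive (Abelianization π)) := by
  classical
  obtain ⟨e⟩ := hAfree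
  haveI := hAnormal
  haveI := hAfi
  haveI : IsMulCommutative A :=
    ⟨⟨fun a b => e.injective (by rw [map_mul, map_mul, mul_comm])⟩⟩
  letI : Fintype (π ⧸ A) := A.fintypeQuotientOfFiniteIndex
  set Z := Subgroup.center π with hZdef
  have hZA : Z ≤ A := by
    rw [← hAmax]; exact Subgroup.center_le_centralizer (A : Set π)
  -- Injectivity of the map to the abelianization, via the transfer homomorphism
  have hker : ∀ z : π, z ∈ Z → Abelianization.of z = 1 → z = 1 := by
    intro z hz h1
    have key : ∀ (k : ℕ) (g₀ : π), g₀⁻¹ * z ^ k * g₀ ∈ A → g₀⁻¹ * z ^ k * g₀ = z ^ k := by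
      intro k g₀ _
      have hzk : z ^ k ∈ Subgroup.center π := Subgroup.pow_mem _ hz k
      rw [mul_assoc, ← Subgroup.mem_center_iff.mp hzk g₀, inv_mul_cancel_left]
    have htr := MonoidHom.transfer_eq_pow (H := A) e.toMonoidHom z key
    have hfac : MonoidHom.transfer e.toMonoidHom z
        = Abelianization.lift (MonoidHom.transfer e.toMonoidHom) (Abelianization.of z) :=
      (Abelianization.lift_apply_of (f := MonoidHom.transfer e.toMonoidHom) z).symm
    rw [h1, map_one] at hfac
    rw [hfac] at htr
    have hpow : z ^ A.index = 1 := by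
      have := e.injective (htr.symm.trans (map_one e.toMonoidHom).symm)
      exact congrArg Subtype.val this
    by_contra hne
    exact htf z hne (isOfFinOrder_iff_pow_eq_one.mpr
      ⟨A.index, Nat.pos_of_ne_zero hAfi.index_ne_zero, hpow⟩)
  have hinj : Function.Injective (fun z : Subgroup.center π => Abelianization.of (z : π)) := by
    intro z w h
    simp only at h
    have h1 : Abelianization.of ((z : π) * (w : π)⁻¹) = 1 := by
      rw [map_mul, map_inv, h, mul_inv_cancel]
    have := hker _ (Subgroup.mul_mem _ z.2 (Subgroup.inv_mem _ w.2)) h1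
    have : (z : π) = (w : π) := by
      rw [← mul_inv_cancel (w : π)] at this
      exact mul_right_cancel this
    exact Subtype.ext this
  -- Z as a free abelian group
  let j : ↥Z →* Multiplicative (Fin n → ℤ) := e.toMonoidHom.comp (Subgroup.inclusion hZA)
  have hjinj : Function.Injective j := e.injective.comp (Subgroup.inclusion_injective hZA)
  let jadd : Additive ↥Z →+ (Fin n → ℤ) :=
    { toFun := fun x => Multiplicative.toAdd (j (Additive.toMul x))
      map_zero' := by simp
      map_add' := by intro x y; simp [toMul_add, map_mul] }
  have hjaddinj : Function.Injective jadd := by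
    intro x y hxy
    exact Additive.toMul.injective (hjinj (Multiplicative.toAdd.injective hxy))
  let jlin := jadd.toIntLinearMap
  obtain ⟨m, bL⟩ := Submodule.basisOfPid (Pi.basisFun ℤ (Fin n)) (LinearMap.range jlin)
  have eZ : Additive ↥Z ≃ₗ[ℤ] (Fin m → ℤ) :=
    (LinearEquiv.ofInjective jlin hjaddinj).trans bL.equivFun
  refine ⟨m, ⟨AddEquiv.toMultiplicativeRight eZ.toAddEquiv⟩, hinj, ?_⟩
  -- the map from `Z` to the abelianization, as a linear map
  let fadd : Additive ↥Z →+ Additive (Abelianization π) :=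
    { toFun := fun x => Additive.ofMul (Abelianization.of ((Additive.toMul x : ↥Z) : π))
      map_zero' := by simp
      map_add' := by intro x y; simp [toMul_add, map_mul] }
  let flin := fadd.toIntLinearMap
  have hfinj : Function.Injective flin := by
    intro x y hxy
    exact Additive.toMul.injective (hinj (Additive.ofMul.injective hxy))
  haveI : Module.Flat ℤ ℚ := IsLocalization.flat ℚ (nonZeroDivisors ℤ)
  let F := flin.baseChange ℚ
  have hFinj : Function.Injective F :=
    Module.Flat.lTensor_preserves_injective_linearMap (M := ℚ) flin hfinj
  have hFsurj : Function.Surjective F := by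
    intro x
    induction x using TensorProduct.induction_on with
    | zero => exact ⟨0, map_zero F⟩
    | add u v hu hv =>
      obtain ⟨p, hp⟩ := hu; obtain ⟨r, hr⟩ := hv
      exact ⟨p + r, by rw [map_add, hp, hr]⟩
    | tmul q x =>
      set k := Fintype.card (π ⧸ A) with hk
      obtain ⟨g, hg⟩ := QuotientGroup.mk_surjective (Additive.toMul x : Abelianization π)
      have hgk : g ^ k ∈ A := by
        have h1 : ((QuotientGroup.mk g : π ⧸ A)) ^ k = 1 := pow_card_eq_one
        rw [← QuotientGroup.mk_pow] at h1
        exact (QuotientGroup.eq_one_iff _).mp h1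
      set a : ↥A := ⟨g ^ k, hgk⟩ with ha
      have hofz : Abelianization.of ((subgroupNorm A a : ↥A) : π)
          = Additive.toMul x ^ (k * k) := by
        rw [of_subgroupNorm]
        calc (Abelianization.of ((a : ↥A) : π)) ^ k
            = ((Abelianization.of g) ^ k) ^ k := by rw [ha]; rw [map_pow]
          _ = (Abelianization.of g) ^ (k * k) := by rw [← pow_mul]
          _ = Additive.toMul x ^ (k * k) := by
              rw [show Abelianization.of g = (Additive.toMul x : Abelianization π) from hg]
      set z : ↥Z := ⟨((subgroupNorm A a : ↥A) : π), subgroupNorm_mem_center A a⟩ with hzz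
      have hz' : flin (Additive.ofMul z) = (k * k) • x := by
        show Additive.ofMul (Abelianization.of ((z : ↥Z) : π)) = (k * k) • x
        rw [hzz]
        show Additive.ofMul (Abelianization.of ((subgroupNorm A a : ↥A) : π)) = (k * k) • x
        rw [hofz, ofMul_pow]
        simp
      have hk0 : ((k : ℚ)) ≠ 0 := Nat.cast_ne_zero.mpr Fintype.card_ne_zero
      refine ⟨(((k : ℚ) * k)⁻¹ * q) ⊗ₜ[ℤ] Additive.ofMul z, ?_⟩
      calc F ((((k : ℚ) * k)⁻¹ * q) ⊗ₜ[ℤ] Additive.ofMul z)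
          = (((k : ℚ) * k)⁻¹ * q) ⊗ₜ[ℤ] ((k * k) • x) := by
            rw [LinearMap.baseChange_tmul, hz']
        _ = (k * k : ℕ) • ((((k : ℚ) * k)⁻¹ * q) ⊗ₜ[ℤ] x) := TensorProduct.tmul_smul _ _ _
        _ = ((k * k : ℕ) • (((k : ℚ) * k)⁻¹ * q)) ⊗ₜ[ℤ] x := by rw [TensorProduct.smul_tmul']
        _ = q ⊗ₜ[ℤ] x := by
            congr 1
            rw [nsmul_eq_mul]
            push_cast
            field_simp
  let E2 := LinearEquiv.ofBijective F ⟨hFinj, hFsurj⟩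
  let E1 := LinearEquiv.baseChange ℤ ℚ (Additive ↥Z) (Fin m → ℤ) eZ
  have h1 : Module.finrank ℚ (ℚ ⊗[ℤ] (Fin m → ℤ)) = m := by
    rw [Module.finrank_eq_card_basis ((Pi.basisFun ℤ (Fin m)).baseChange ℚ), Fintype.card_fin]
  calc m = Module.finrank ℚ (ℚ ⊗[ℤ] (Fin m → ℤ)) := h1.symm
    _ = Module.finrank ℚ (ℚ ⊗[ℤ] Additive ↥Z) := (LinearEquiv.finrank_eq E1).symm
    _ = Module.finrank ℚ (ℚ ⊗[ℤ] Additive (Abelianization π)) := LinearEquiv.finrank_eq E2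
end

section
/- Let π be a group and Z a central subgroup of π that is free abelian of finite rank k, and put Q = π/Z. Assume the abelianization π^ab is finitely generated. Then the following are equivalent: (1) the composite Z → π → π^ab is injective; (2) there exists a finite-index normal subgroup Q′ of Q such that, for the preimage π′ of Q′ in π, the induced central extension 1 → Z → π′ → Q′ → 1 splits (i.e. Z has a complement in π′). -/
open scoped Pointwise


/-- A subgroup contained in the center is normal. -/
theorem Subgroup.normal_of_le_center' {π : Type*} [Group π] (Z : Subgroup π)
    (hZ : Z ≤ Subgroup.center π) : Z.Normal :=
  ⟨fun z hz g => by
    have h := (Subgroup.mem_center_iff.mp (hZ hz)) g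
    rw [h, mul_inv_cancel_right]
    exact hz⟩

lemma aux_finite_quotient {k : ℕ} (g : (Fin k → ℤ) →ₗ[ℤ] (Fin k → ℤ))
    (hg : Function.Injective g) :
    Finite ((Fin k → ℤ) ⧸ LinearMap.range g) := by
  classical
  set A : Matrix (Fin k) (Fin k) ℤ := LinearMap.toMatrix' g with hA
  have hAg : ∀ v, A.mulVec v = g v := by
    intro v
    rw [← Matrix.toLin'_apply, hA, Matrix.toLin'_toMatrix']
  have hd : A.det ≠ 0 := by
    intro h0
    obtain ⟨v, hv, hv0⟩ := Matrix.exists_mulVec_eq_zero_iff.mpr h0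
    exact hv (hg (by rw [← hAg, hv0, map_zero]))
  have key : ∀ v : Fin k → ℤ, A.det • v ∈ LinearMap.range g := by
    intro v
    refine ⟨(A.adjugate).mulVec v, ?_⟩
    rw [← hAg, Matrix.mulVec_mulVec, Matrix.mul_adjugate, Matrix.smul_mulVec,
      Matrix.one_mulVec]
  haveI : AddGroup.FG ((Fin k → ℤ) ⧸ LinearMap.range g) :=
    Module.Finite.iff_addGroup_fg.mp inferInstance
  apply AddCommGroup.finite_of_fg_torsion
  intro x
  obtain ⟨v, rfl⟩ := Submodule.Quotient.mk_surjective _ x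
  rw [isOfFinAddOrder_iff_nsmul_eq_zero]
  refine ⟨A.det.natAbs, Int.natAbs_pos.mpr hd, ?_⟩
  have h1 : ((A.det.natAbs : ℤ)) • v ∈ LinearMap.range g := by
    rcases Int.natAbs_eq A.det with h | h
    · rw [← h]; exact key v
    · have h2 := neg_mem (key v)
      rw [← neg_smul] at h2
      have : -A.det = (A.det.natAbs : ℤ) := by omega
      rwa [this] at h2
  have : ((A.det.natAbs : ℤ)) • (Submodule.Quotient.mk v :
      (Fin k → ℤ) ⧸ LinearMap.range g) = 0 := by
    rw [← Submodule.Quotient.mk_smul, Submodule.Quotient.mk_eq_zero]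
    exact h1
  rwa [natCast_zsmul] at this

lemma aux_retract {k : ℕ} {R M : Type*} [CommRing R] [IsDomain R] [IsPrincipalIdealRing R]
    [AddCommGroup M] [Module R M]
    [Module.Finite R M] (j : (Fin k → R) →ₗ[R] M) (hj : Function.Injective j) :
    ∃ χ : M →ₗ[R] (Fin k → R), Function.Injective (χ ∘ₗ j) := by
  classical
  let j₁ : (Fin k → R) →ₗ[R] (M ⧸ Submodule.torsion R M) :=
    (Submodule.torsion R M).mkQ ∘ₗ j
  have hj₁ : Function.Injective j₁ := by
    rw [injective_iff_map_eq_zero]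
    intro x hx
    have hmem : j x ∈ Submodule.torsion R M := by
      rwa [← Submodule.Quotient.mk_eq_zero]
    obtain ⟨a, ha⟩ := (Submodule.mem_torsion_iff _).mp hmem
    have h2 := LinearMap.map_smul j (a : R) x
    have h4 := h2.trans ha
    have h5 := hj (h4.trans (map_zero j).symm)
    funext i
    have h6 := congrFun h5 i
    have h7 : (a : R) * x i = 0 := h6
    exact (mul_eq_zero.mp h7).resolve_left (nonZeroDivisors.coe_ne_zero a)
  let N := LinearMap.range j₁
  haveI : Module.Free R (M ⧸ Submodule.torsion R M) :=
    Module.free_of_finite_type_torsion_free'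
  let b := Module.Free.chooseBasis R (M ⧸ Submodule.torsion R M)
  obtain ⟨n, snf⟩ := N.smithNormalForm b
  have ha : ∀ i, snf.a i ≠ 0 := by
    intro i h0
    apply snf.bN.ne_zero i
    have hsnf := snf.snf i
    rw [h0, zero_smul] at hsnf
    exact Subtype.coe_injective hsnf
  have hnk : n = k := by
    have h1 : Module.finrank R N = n := by
      rw [Module.finrank_eq_card_basis snf.bN, Fintype.card_fin]
    have h2 : Module.finrank R (Fin k → R) = Module.finrank R N :=
      (LinearEquiv.ofInjective j₁ hj₁).finrank_eq
    rw [Module.finrank_pi, Fintype.card_fin] at h2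
    omega
  subst hnk
  refine ⟨(LinearMap.pi fun i => snf.bM.coord (snf.f i)) ∘ₗ (Submodule.torsion R M).mkQ, ?_⟩
  rw [injective_iff_map_eq_zero]
  intro x hx
  have hmem : j₁ x ∈ N := LinearMap.mem_range_self j₁ x
  set m : N := ⟨j₁ x, hmem⟩ with hm
  have hcoord : ∀ i, snf.bM.repr (j₁ x) (snf.f i) = 0 := by
    intro i
    have := congrFun hx i
    simpa [LinearMap.pi_apply, Module.Basis.coord_apply, j₁] using this
  have hrepr : ∀ i, snf.bN.repr m i = 0 := by
    intro i
    have h2 := snf.repr_apply_embedding_eq_repr_smul (m := m) (i := i)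
    have h3 : snf.bM.repr (m : M ⧸ Submodule.torsion R M) (snf.f i) = 0 := hcoord i
    rw [h3] at h2
    rw [map_smul, Finsupp.smul_apply, smul_eq_mul] at h2
    exact (mul_eq_zero.mp h2.symm).resolve_left (ha i)
  have hm0 : m = 0 := by
    have : snf.bN.repr m = 0 := Finsupp.ext hrepr
    simpa using congrArg snf.bN.repr.symm this
  have hj₁x : j₁ x = 0 := by
    have := congrArg Subtype.val hm0
    simpa [hm] using this
  exact hj₁ (by rw [hj₁x, map_zero])

lemma aux_splitting_hom {π : Type*} [Group π] (Z π' C : Subgroup π)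
    (hZc : Z ≤ Subgroup.center π) (hCle : C ≤ π') (hZle : Z ≤ π')
    (hinf : Z ⊓ C = ⊥) (hsup : Z ⊔ C = π') :
    ∃ r : ↥π' →* ↥Z, ∀ (z : π) (hz : z ∈ Z) (h' : z ∈ π'), ((r ⟨z, h'⟩ : ↥Z) : π) = z := by
  haveI : Z.Normal := Subgroup.normal_of_le_center' Z hZc
  have huniq : ∀ z₁ c₁ z₂ c₂ : π, z₁ ∈ Z → z₂ ∈ Z → c₁ ∈ C → c₂ ∈ C →
      z₁ * c₁ = z₂ * c₂ → z₁ = z₂ := by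
    intro z₁ c₁ z₂ c₂ hz₁ hz₂ hc₁ hc₂ heq
    have key : z₂⁻¹ * z₁ = c₂ * c₁⁻¹ := by
      have h := congrArg (fun t => z₂⁻¹ * t * c₁⁻¹) heq
      simpa [mul_assoc] using h
    have hmem : z₂⁻¹ * z₁ ∈ Z ⊓ C := by
      refine Subgroup.mem_inf.mpr ⟨mul_mem (inv_mem hz₂) hz₁, ?_⟩
      rw [key]
      exact mul_mem hc₂ (inv_mem hc₁)
    rw [hinf] at hmem
    have : z₂⁻¹ * z₁ = 1 := hmem
    rw [inv_mul_eq_one] at this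
    exact this.symm
  have hex : ∀ g : ↥π', ∃ z : ↥Z, ∃ c : π, c ∈ C ∧ (z : π) * c = ↑g := by
    intro g
    have hg : (↑g : π) ∈ Z ⊔ C := by rw [hsup]; exact g.2
    have hg' : (↑g : π) ∈ (↑Z * ↑C : Set π) := by
      rw [← Subgroup.normal_mul]
      exact hg
    rw [Set.mem_mul] at hg'
    obtain ⟨x, hx, y, hy, hxy⟩ := hg'
    exact ⟨⟨x, hx⟩, y, hy, hxy⟩
  choose zf cf hcf heq using hex
  have hmul : ∀ g₁ g₂ : ↥π', zf (g₁ * g₂) = zf g₁ * zf g₂ := by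
    intro g₁ g₂
    apply Subtype.ext
    refine huniq _ (cf (g₁ * g₂)) _ (cf g₁ * cf g₂) (zf (g₁ * g₂)).2
      (mul_mem (zf g₁).2 (zf g₂).2) (hcf _) (mul_mem (hcf g₁) (hcf g₂)) ?_
    have hcomm : cf g₁ * ↑(zf g₂) = ↑(zf g₂) * cf g₁ :=
      Subgroup.mem_center_iff.mp (hZc (zf g₂).2) (cf g₁)
    calc ↑(zf (g₁ * g₂)) * cf (g₁ * g₂) = ↑(g₁ * g₂) := heq _
      _ = (↑(zf g₁) * cf g₁) * (↑(zf g₂) * cf g₂) := by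
          rw [Subgroup.coe_mul, heq, heq]
      _ = ↑(zf g₁) * ↑(zf g₂) * (cf g₁ * cf g₂) := by
          rw [mul_assoc, mul_assoc, ← mul_assoc (cf g₁), hcomm, mul_assoc]
  refine ⟨MonoidHom.mk' zf hmul, ?_⟩
  intro z hz h'
  exact huniq _ (cf ⟨z, h'⟩) z 1 (zf ⟨z, h'⟩).2 hz (hcf _) (one_mem C)
    ((heq ⟨z, h'⟩).trans (mul_one z).symm)


/-- **Remark 2.4.** Let `π` be a group with finitely generated abelianization
and `Z` a central subgroup of `π`, free abelian of finite rank `k`; put `Q = π/Z`.  The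
following are equivalent: (1) the composite `Z → π → π^ab` is injective; (2) there is a
finite-index normal subgroup `Q'` of `Q` such that, for the preimage `π'` of `Q'` in `π`,
the induced central extension `1 → Z → π' → Q' → 1` splits, i.e. `Z` has a complement
in `π'`. -/
theorem homologically_injective_iff_injective_splitting
    {π : Type*} [Group π] (k : ℕ) (Z : Subgroup π)
    (hZcentral : Z ≤ Subgroup.center π)
    (hZfree : Nonempty (Z ≃* Multiplicative (Fin k → ℤ)))
    (hfg : Group.FG (Abelianization π)) :
    letI : Z.Normal := Subgroup.normal_of_le_center' Z hZcentral
    (Function.Injective (fun z : Z => Abelianization.of (z : π)) ↔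
      ∃ Q' : Subgroup (π ⧸ Z), Q'.Normal ∧ Q'.FiniteIndex ∧
        ∃ C : Subgroup π, C ≤ Q'.comap (QuotientGroup.mk' Z) ∧
          Z ⊓ C = ⊥ ∧ Z ⊔ C = Q'.comap (QuotientGroup.mk' Z)) := by
  letI : Z.Normal := Subgroup.normal_of_le_center' Z hZcentral
  haveI := hfg
  constructor
  · -- (1) → (2)
    intro h1
    obtain ⟨e⟩ := hZfree
    let ιh : ↥Z →* Abelianization π := (Abelianization.of).comp Z.subtype
    have hιinj : Function.Injective ιh := h1
    let jm : Multiplicative (Fin k → ℤ) →* Abelianization π := ιh.comp e.symm.toMonoidHom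
    have hjm : Function.Injective jm := hιinj.comp e.symm.injective
    let ja : (Fin k → ℤ) →+ Additive (Abelianization π) := MonoidHom.toAdditiveRight jm
    have hjainj : Function.Injective ja := by
      have : ⇑ja = ⇑Additive.ofMul ∘ ⇑jm ∘ ⇑Multiplicative.ofAdd :=
        MonoidHom.coe_toAdditiveRight jm
      rw [this]
      exact Additive.ofMul.injective.comp (hjm.comp Multiplicative.ofAdd.injective)
    haveI : Module.Finite ℤ (Additive (Abelianization π)) :=
      Module.Finite.iff_addGroup_fg.mpr inferInstance
    obtain ⟨χ, hχ⟩ := aux_retract ja.toIntLinearMap hjainj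
    haveI hfinq := aux_finite_quotient _ hχ
    let χm : Abelianization π →* Multiplicative (Fin k → ℤ) :=
      AddMonoidHom.toMultiplicativeRight χ.toAddMonoidHom
    let θ : π →* Multiplicative (Fin k → ℤ) := χm.comp Abelianization.of
    let fZL : ↥Z →* Multiplicative (Fin k → ℤ) := χm.comp ιh
    let L : Subgroup (Multiplicative (Fin k → ℤ)) := fZL.range
    have keyχ : ∀ z : ↥Z, (χ ∘ₗ ja.toIntLinearMap) ((e z).toAdd) = (fZL z).toAdd := by
      intro z
      show χ (ja ((e z).toAdd)) = (χm (ιh z)).toAdd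
      have h2 : ja ((e z).toAdd) = Additive.ofMul (ιh (e.symm (e z))) := rfl
      rw [h2, MulEquiv.symm_apply_apply]
      rfl
    have hfZLinj : Function.Injective fZL := by
      intro z₁ z₂ hz
      have h3 := hχ ((keyχ z₁).trans (by rw [hz, ← keyχ z₂]))
      exact e.injective (Multiplicative.toAdd.injective h3)
    have hθZ : ∀ z, z ∈ Z → θ z ∈ L := fun z hz => ⟨⟨z, hz⟩, rfl⟩
    let π' : Subgroup π := L.comap θ
    have hZle : Z ≤ π' := fun z hz => hθZ z hz
    -- range of χ ∘ j lands in L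
    have hle : ∀ v : Fin k → ℤ, v ∈ LinearMap.range (χ ∘ₗ ja.toIntLinearMap) →
        Multiplicative.ofAdd v ∈ L := by
      rintro v ⟨w, rfl⟩
      exact ⟨e.symm (Multiplicative.ofAdd w), rfl⟩
    haveI hfinL : Finite (Multiplicative (Fin k → ℤ) ⧸ L) := by
      let F : ((Fin k → ℤ) ⧸ LinearMap.range (χ ∘ₗ ja.toIntLinearMap)) →
          (Multiplicative (Fin k → ℤ) ⧸ L) := fun v =>
        Quotient.liftOn' v
          (fun x => ((Multiplicative.ofAdd x : Multiplicative (Fin k → ℤ)) :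
            Multiplicative (Fin k → ℤ) ⧸ L))
          (fun a b hab => by
            have hab' : a - b ∈ LinearMap.range (χ ∘ₗ ja.toIntLinearMap) :=
              (Submodule.quotientRel_def _).mp hab
            apply (QuotientGroup.eq (s := L)).mpr
            have h2 : (-a + b) ∈ LinearMap.range (χ ∘ₗ ja.toIntLinearMap) := by
              have h3 := neg_mem hab'
              rw [neg_add_eq_sub]; rwa [neg_sub] at h3
            exact hle _ h2)
      have hFsurj : Function.Surjective F := by
        intro q
        obtain ⟨g, rfl⟩ := QuotientGroup.mk_surjective q
        exact ⟨Submodule.Quotient.mk g.toAdd, rfl⟩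
      exact Finite.of_surjective F hFsurj
    haveI hLfi : L.FiniteIndex := Subgroup.finiteIndex_of_finite_quotient (H := L)
    haveI hπ'fi : π'.FiniteIndex := by
      constructor
      rw [Subgroup.index_comap]
      intro h0
      have hdvd := Subgroup.relIndex_dvd_index_of_normal (H := L) (K := θ.range)
      rw [h0] at hdvd
      exact hLfi.index_ne_zero (zero_dvd_iff.mp hdvd)
    have hπ'norm : π'.Normal := (Subgroup.normal_of_comm L).comap θ
    have hcm : (π'.map (QuotientGroup.mk' Z)).comap (QuotientGroup.mk' Z) = π' := by
      rw [Subgroup.comap_map_eq, QuotientGroup.ker_mk']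
      exact sup_eq_left.mpr hZle
    -- complement via retraction
    let eL : ↥Z ≃* ↥L := MonoidHom.ofInjective hfZLinj
    let θres : ↥π' →* ↥L := (θ.comp π'.subtype).codRestrict L (fun x => x.2)
    let r : ↥π' →* ↥Z := (eL.symm.toMonoidHom).comp θres
    have hrZ : ∀ (z : π) (hz : z ∈ Z) (h' : z ∈ π'), ((r ⟨z, h'⟩ : ↥Z) : π) = z := by
      intro z hz h'
      have h2 : θres ⟨z, h'⟩ = eL ⟨z, hz⟩ := by
        apply Subtype.ext
        rw [MonoidHom.ofInjective_apply]
        rfl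
      show ((eL.symm (θres ⟨z, h'⟩) : ↥Z) : π) = z
      rw [h2, MulEquiv.symm_apply_apply]
    let C : Subgroup π := r.ker.map π'.subtype
    have hCle : C ≤ π' := Subgroup.map_subtype_le _
    refine ⟨π'.map (QuotientGroup.mk' Z), hπ'norm.map _ (QuotientGroup.mk'_surjective Z),
      ?_, C, ?_, ?_, ?_⟩
    · constructor
      rw [Subgroup.index_map_eq _ (QuotientGroup.mk'_surjective Z)
        (by rw [QuotientGroup.ker_mk']; exact hZle)]
      exact hπ'fi.index_ne_zero
    · rw [hcm]; exact hCle
    · rw [eq_bot_iff]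
      intro x hx
      obtain ⟨hxZ, hxC⟩ := Subgroup.mem_inf.mp hx
      obtain ⟨g, hg, hgx⟩ := hxC
      have hx' : x ∈ π' := hgx ▸ g.2
      have hgeq : g = ⟨x, hx'⟩ := Subtype.ext hgx
      rw [hgeq] at hg
      have h3 := hrZ x hxZ hx'
      have hg1 : r ⟨x, hx'⟩ = 1 := hg
      rw [hg1] at h3
      simpa [Subgroup.mem_bot] using h3.symm
    · rw [hcm]
      apply le_antisymm (sup_le hZle hCle)
      intro g hg
      set gz := r ⟨g, hg⟩ with hgz
      have hz' : (↑gz : π) ∈ π' := hZle gz.2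
      have hcmem : (↑gz : π)⁻¹ * g ∈ C := by
        refine ⟨⟨(↑gz : π)⁻¹ * g, mul_mem (inv_mem hz') hg⟩, ?_, rfl⟩
        have hsplit : (⟨(↑gz : π)⁻¹ * g, mul_mem (inv_mem hz') hg⟩ : ↥π') =
            (⟨↑gz, hz'⟩ : ↥π')⁻¹ * ⟨g, hg⟩ := Subtype.ext rfl
        show r _ = 1
        rw [hsplit, map_mul, map_inv]
        have h4 : r ⟨↑gz, hz'⟩ = gz := Subtype.ext (hrZ ↑gz gz.2 hz')
        rw [h4, ← hgz]
        exact inv_mul_cancel gz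
      have hdec : g = ↑gz * ((↑gz : π)⁻¹ * g) := by
        rw [← mul_assoc, mul_inv_cancel, one_mul]
      rw [hdec]
      exact mul_mem ((le_sup_left : Z ≤ Z ⊔ C) gz.2) ((le_sup_right : C ≤ Z ⊔ C) hcmem)
  · -- (2) → (1)
    rintro ⟨Q', hQn, hQfi, C, hCle, hinf, hsup⟩
    set π' : Subgroup π := Q'.comap (QuotientGroup.mk' Z) with hπ'def
    haveI hπ'fi : π'.FiniteIndex := by
      constructor
      rw [hπ'def, Subgroup.index_comap_of_surjective _ (QuotientGroup.mk'_surjective Z)]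
      exact hQfi.index_ne_zero
    have hZle : Z ≤ π' := by
      intro z hz
      show QuotientGroup.mk' Z z ∈ Q'
      have h1 : QuotientGroup.mk' Z z = 1 := by
        rw [← MonoidHom.mem_ker, QuotientGroup.ker_mk']
        exact hz
      rw [h1]
      exact Q'.one_mem
    obtain ⟨r, hr⟩ := aux_splitting_hom Z π' C hZcentral hCle hZle hinf hsup
    letI : CommGroup ↥Z :=
      { (inferInstance : Group ↥Z) with
        mul_comm := fun a b =>
          Subtype.ext ((Subgroup.mem_center_iff.mp (hZcentral b.2)) ↑a) }
    let ψ : π →* ↥Z := MonoidHom.transfer r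
    have key : ∀ z : ↥Z, Abelianization.of (z : π) = 1 → z = 1 := by
      intro z hz1
      have hψ1 : ψ ↑z = 1 := by
        have h2 : ψ (↑z : π) = Abelianization.lift ψ (Abelianization.of ↑z) :=
          (Abelianization.lift_apply_of ψ ↑z).symm
        rw [h2, hz1, map_one]
      have hcent : ∀ (m : ℕ) (g₀ : π), g₀⁻¹ * (↑z : π) ^ m * g₀ ∈ π' →
          g₀⁻¹ * (↑z : π) ^ m * g₀ = (↑z : π) ^ m := by
        intro m g₀ _
        have hc : (↑z : π) ^ m ∈ Subgroup.center π := pow_mem (hZcentral z.2) m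
        rw [mul_assoc, ← Subgroup.mem_center_iff.mp hc g₀, ← mul_assoc, inv_mul_cancel,
          one_mul]
      have hψ2 := MonoidHom.transfer_eq_pow r (↑z : π) hcent
      have hmemZ : ((↑z : π)) ^ π'.index ∈ Z := pow_mem z.2 _
      have h5 : ((↑z : π)) ^ π'.index = 1 := by
        have h6 := hr ((↑z : π) ^ π'.index) hmemZ (MonoidHom.transfer_eq_pow_aux _ hcent)
        rw [← hψ2, hψ1] at h6
        exact h6.symm.trans rfl
      -- torsion-free
      obtain ⟨e⟩ := hZfree
      have h7 : (e z) ^ π'.index = 1 := by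
        have h8 : z ^ π'.index = 1 := by
          apply Subtype.ext
          rw [SubmonoidClass.coe_pow]
          exact h5
        rw [← map_pow, h8, map_one]
      have h9 : (π'.index : ℤ) • (e z).toAdd = 0 := by
        have := congrArg Multiplicative.toAdd h7
        rw [toAdd_pow] at this
        exact_mod_cast this
      have h10 : (e z).toAdd = 0 := by
        have hne : (π'.index : ℤ) ≠ 0 := Int.natCast_ne_zero.mpr hπ'fi.index_ne_zero
        funext i
        have := congrFun h9 i
        have h11 : (π'.index : ℤ) * (e z).toAdd i = 0 := this
        exact (mul_eq_zero.mp h11).resolve_left hne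
      have h12 : e z = 1 := Multiplicative.toAdd.injective (by rw [h10]; rfl)
      exact e.injective (by rw [h12, map_one])
    intro z₁ z₂ h12
    have h12' : Abelianization.of (↑z₁ : π) = Abelianization.of (↑z₂ : π) := h12
    have h13 : Abelianization.of ((↑(z₁ * z₂⁻¹) : π)) = 1 := by
      rw [Subgroup.coe_mul, map_mul]
      rw [show ((z₂⁻¹ : ↥Z) : π) = (↑z₂ : π)⁻¹ from rfl, map_inv, h12', mul_inv_cancel]
    have h14 := key _ h13
    rwa [mul_inv_eq_one] at h14
end
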